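/- arXiv:0711.3208 — 3 statements merged into one kernel-verified Lean document; each statement's English description precedes it below -/
import Mathlib

section
/- Let α < β < x* be real numbers and define F(x) = log((√((x*−α)/(x*−β)) − √((x−α)/(x−β)))/(√((x*−α)/(x*−β)) + √((x−α)/(x−β)))) for complex x, where √((x−α)/(x−β)) = √((x−α)(x−β))/(x−β) with branch cut [α,β] and the principal branch of the logarithm is used. Then: (1) F is analytic on ℂ∖[α, x*]; (2) F₊(x) = −F₋(x) for x ∈ (α, β), where F_± denote boundary values from the upper/lower half plane; (3) F₊(x) = F₋(x) + 2πi for x ∈ (β, x*); (4) F(x) − log(x−x*) is bounded as x → x*; (5) F(x) → F₀ := log((√((x*−α)/(x*−β)) − 1)/(√((x*−α)/(x*−β)) + 1)) as x → ∞; (6) F is bounded in punctured neighborhoods of α and of β. -/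
open Filter Set

section S7helpers
open Complex Filter Set
open Complex

noncomputable def Complex.abs : AbsoluteValue ℂ ℝ where
  toFun z := ‖z‖
  map_mul' := norm_mul
  nonneg' := norm_nonneg
  eq_zero' _ := norm_eq_zero
  add_le' := norm_add_le

lemma Complex.abs_apply (z : ℂ) : Complex.abs z = ‖z‖ := rfl

lemma Complex.abs_ofReal (x : ℝ) : Complex.abs (x : ℂ) = |x| := by
  show ‖(x:ℂ)‖ = |x|
  simp

lemma Complex.abs_conj (z : ℂ) : Complex.abs ((starRingEnd ℂ) z) = Complex.abs z :=
  Complex.norm_conj z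

lemma S7.re_half_nonneg (w : ℂ) : 0 ≤ (w ^ ((2:ℂ)⁻¹)).re := by
  rcases eq_or_ne w 0 with h | h
  · simp [h, Complex.zero_cpow (by norm_num : ((2:ℂ)⁻¹) ≠ 0)]
  · rw [Complex.cpow_def_of_ne_zero h, Complex.exp_re]
    have harg : (Complex.log w * (2:ℂ)⁻¹).im = w.arg / 2 := by
      simp [Complex.mul_im, Complex.log_im, Complex.log_re]
      ring
    rw [harg]
    have h1 := Complex.arg_mem_Ioc w
    have : Real.cos (w.arg / 2) ≥ 0 := by
      apply Real.cos_nonneg_of_mem_Icc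
      constructor <;> [linarith [h1.1, Real.pi_pos]; linarith [h1.2]]
    positivity

lemma S7.sq_half (w : ℂ) : (w ^ ((2:ℂ)⁻¹)) * (w ^ ((2:ℂ)⁻¹)) = w := by
  rcases eq_or_ne w 0 with h | h
  · simp [h, Complex.zero_cpow (by norm_num : ((2:ℂ)⁻¹) ≠ 0)]
  · rw [← Complex.cpow_add _ _ h]
    norm_num

lemma S7.abs_half (w : ℂ) : Complex.abs (w ^ ((2:ℂ)⁻¹)) = Complex.abs w ^ ((2:ℝ)⁻¹) := by
  have := Complex.norm_cpow_inv_nat w 2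
  simpa [Complex.abs_apply] using this

lemma S7.ofReal_half {x : ℝ} (hx : 0 ≤ x) : ((x:ℂ)) ^ ((2:ℂ)⁻¹) = (Real.sqrt x : ℂ) := by
  rw [Real.sqrt_eq_rpow, show ((2:ℂ)⁻¹) = (((2⁻¹:ℝ)) : ℂ) by norm_num,
    ← Complex.ofReal_cpow hx]
  norm_num

lemma S7.im_half_neg {w : ℂ} (hw : w.im < 0) : (w ^ ((2:ℂ)⁻¹)).im < 0 := by
  set u := w ^ ((2:ℂ)⁻¹) with hu
  have h2 : u * u = w := S7.sq_half w
  have him : w.im = 2 * u.re * u.im := by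
    rw [← h2]; simp [Complex.mul_im]; ring
  have hre : 0 ≤ u.re := S7.re_half_nonneg w
  by_contra h
  push_neg at h
  nlinarith

lemma S7.im_half_pos {w : ℂ} (hw : 0 < w.im) : 0 < (w ^ ((2:ℂ)⁻¹)).im := by
  set u := w ^ ((2:ℂ)⁻¹) with hu
  have h2 : u * u = w := S7.sq_half w
  have him : w.im = 2 * u.re * u.im := by
    rw [← h2]; simp [Complex.mul_im]; ring
  have hre : 0 ≤ u.re := S7.re_half_nonneg w
  by_contra h
  push_neg at h
  nlinarith

lemma S7.im_div (a b : ℝ) (z : ℂ) :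
    ((z - (a:ℂ))/(z - (b:ℂ))).im = (a - b) * z.im / Complex.normSq (z - (b:ℂ)) := by
  rw [Complex.div_im, div_sub_div_same]
  congr 1
  simp [Complex.sub_re, Complex.sub_im]
  ring

lemma S7.im_q (s : ℝ) (u : ℂ) :
    (((s:ℂ) - u)/((s:ℂ) + u)).im = (-2*s*u.im)/Complex.normSq ((s:ℂ)+u) := by
  rw [Complex.div_im, div_sub_div_same]
  congr 1
  simp [Complex.sub_re, Complex.sub_im, Complex.add_re, Complex.add_im]
  ring

lemma S7.norm_log_le (w : ℂ) : ‖Complex.log w‖ ≤ |Real.log (Complex.abs w)| + Real.pi := by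
  have h := Complex.norm_le_abs_re_add_abs_im (Complex.log w)
  rw [Complex.log_re, Complex.log_im] at h
  calc ‖Complex.log w‖ = Complex.abs (Complex.log w) := rfl
    _ ≤ |Real.log (Complex.abs w)| + |w.arg| := h
    _ ≤ |Real.log (Complex.abs w)| + Real.pi := by
        linarith [Complex.abs_arg_le_pi w]

lemma S7.t_slitPlane {a b : ℝ} (hab : a < b) {z : ℂ}
    (hz : z ∉ Complex.ofReal '' Set.Icc a b) :
    (z - (a:ℂ))/(z - (b:ℂ)) ∈ Complex.slitPlane := by
  rw [Complex.mem_slitPlane_iff]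
  by_cases him : z.im = 0
  · left
    have hzre : z = ((z.re : ℝ) : ℂ) := Complex.ext rfl (by simp [him])
    have hre : z.re ∉ Set.Icc a b := by
      intro h; exact hz ⟨z.re, h, hzre.symm⟩
    rw [Set.mem_Icc] at hre
    push_neg at hre
    have key : z - (a:ℂ) = ((z.re - a : ℝ) : ℂ) ∧ z - (b:ℂ) = ((z.re - b : ℝ) : ℂ) := by
      constructor <;> (apply Complex.ext <;> simp [him])
    rw [key.1, key.2, ← Complex.ofReal_div, Complex.ofReal_re]
    rcases lt_or_ge z.re a with h | h
    · exact div_pos_of_neg_of_neg (by linarith) (by linarith)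
    · have := hre h
      exact div_pos (by linarith) (by linarith)
  · right
    rw [S7.im_div]
    have hzb : z - (b:ℂ) ≠ 0 := fun h => him (by
      have : z = (b:ℂ) := by linear_combination h
      simp [this])
    have hN : Complex.normSq (z - (b:ℂ)) ≠ 0 := fun h => hzb (Complex.normSq_eq_zero.mp h)
    exact div_ne_zero (mul_ne_zero (by linarith [hab] : a - b ≠ 0) him) hN

lemma S7.tendsto_t_above (a b : ℝ) (hab : a < b) (x : ℝ) (hxb : x ≠ b) :
    Tendsto (fun ε : ℝ => (((x:ℂ) + ε*Complex.I) - (a:ℂ))/(((x:ℂ) + ε*Complex.I) - (b:ℂ)))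
      (nhdsWithin 0 (Set.Ioi 0)) (nhdsWithin (((x - a)/(x - b) : ℝ) : ℂ) {w : ℂ | w.im < 0}) := by
  rw [tendsto_nhdsWithin_iff]
  constructor
  · have hden : ((x:ℂ) + (0:ℝ)*Complex.I) - (b:ℂ) ≠ 0 := by
      simp only [Complex.ofReal_zero, zero_mul, add_zero]
      intro h
      exact hxb (by exact_mod_cast sub_eq_zero.mp h)
    have hc : ContinuousAt (fun ε : ℝ =>
        (((x:ℂ) + ε*Complex.I) - (a:ℂ))/(((x:ℂ) + ε*Complex.I) - (b:ℂ))) 0 := by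
      apply ContinuousAt.div
      · fun_prop
      · fun_prop
      · exact hden
    have := hc.continuousWithinAt (s := Set.Ioi 0)
    have hval : (((x:ℂ) + (0:ℝ)*Complex.I) - (a:ℂ))/(((x:ℂ) + (0:ℝ)*Complex.I) - (b:ℂ))
        = (((x - a)/(x - b) : ℝ) : ℂ) := by push_cast; ring_nf
    rw [ContinuousWithinAt, hval] at this
    exact this
  · filter_upwards [self_mem_nhdsWithin] with ε (hε : 0 < ε)
    have him : ((x:ℂ) + ε*Complex.I).im = ε := by simp
    have hzb : ((x:ℂ) + ε*Complex.I) - (b:ℂ) ≠ 0 := by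
      intro h
      have : (((x:ℂ) + ε*Complex.I) - (b:ℂ)).im = 0 := by rw [h]; simp
      simp at this
      linarith
    show ((((x:ℂ) + ε*Complex.I) - (a:ℂ))/(((x:ℂ) + ε*Complex.I) - (b:ℂ))).im < 0
    rw [S7.im_div, him]
    apply div_neg_of_neg_of_pos
    · exact mul_neg_of_neg_of_pos (by linarith) hε
    · exact Complex.normSq_pos.mpr hzb

lemma S7.tendsto_t_below (a b : ℝ) (hab : a < b) (x : ℝ) (hxb : x ≠ b) :
    Tendsto (fun ε : ℝ => (((x:ℂ) + ε*Complex.I) - (a:ℂ))/(((x:ℂ) + ε*Complex.I) - (b:ℂ)))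
      (nhdsWithin 0 (Set.Iio 0)) (nhdsWithin (((x - a)/(x - b) : ℝ) : ℂ) {w : ℂ | 0 < w.im}) := by
  rw [tendsto_nhdsWithin_iff]
  constructor
  · have hden : ((x:ℂ) + (0:ℝ)*Complex.I) - (b:ℂ) ≠ 0 := by
      simp only [Complex.ofReal_zero, zero_mul, add_zero]
      intro h
      exact hxb (by exact_mod_cast sub_eq_zero.mp h)
    have hc : ContinuousAt (fun ε : ℝ =>
        (((x:ℂ) + ε*Complex.I) - (a:ℂ))/(((x:ℂ) + ε*Complex.I) - (b:ℂ))) 0 := by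
      apply ContinuousAt.div
      · fun_prop
      · fun_prop
      · exact hden
    have := hc.continuousWithinAt (s := Set.Iio 0)
    have hval : (((x:ℂ) + (0:ℝ)*Complex.I) - (a:ℂ))/(((x:ℂ) + (0:ℝ)*Complex.I) - (b:ℂ))
        = (((x - a)/(x - b) : ℝ) : ℂ) := by push_cast; ring_nf
    rw [ContinuousWithinAt, hval] at this
    exact this
  · filter_upwards [self_mem_nhdsWithin] with ε (hε : ε < 0)
    have him : ((x:ℂ) + ε*Complex.I).im = ε := by simp
    have hzb : ((x:ℂ) + ε*Complex.I) - (b:ℂ) ≠ 0 := by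
      intro h
      have : (((x:ℂ) + ε*Complex.I) - (b:ℂ)).im = 0 := by rw [h]; simp
      simp at this
      linarith
    show 0 < ((((x:ℂ) + ε*Complex.I) - (a:ℂ))/(((x:ℂ) + ε*Complex.I) - (b:ℂ))).im
    rw [S7.im_div, him]
    apply div_pos
    · exact mul_pos_of_neg_of_neg (by linarith) hε
    · exact Complex.normSq_pos.mpr hzb
lemma S7.outer_continuousAt (s : ℝ) (hs : 0 < s) (c : ℝ) (hc : c ≠ 0) (L : ℂ)
    (hexp : Complex.exp (L * (2:ℂ)⁻¹) = (c:ℂ) * Complex.I) :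
    ContinuousAt (fun w => Complex.log
      (((s:ℂ) - Complex.exp (w * (2:ℂ)⁻¹))/((s:ℂ) + Complex.exp (w * (2:ℂ)⁻¹)))) L := by
  have hden : (s:ℂ) + Complex.exp (L * (2:ℂ)⁻¹) ≠ 0 := by
    rw [hexp]
    intro h
    have h2 : ((s:ℂ) + (c:ℂ)*Complex.I).im = 0 := by rw [h]; simp
    simp at h2
    exact hc h2
  have hinner : ContinuousAt (fun w => ((s:ℂ) - Complex.exp (w * (2:ℂ)⁻¹))/
      ((s:ℂ) + Complex.exp (w * (2:ℂ)⁻¹))) L := by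
    apply ContinuousAt.div
    · fun_prop
    · fun_prop
    · exact hden
  apply ContinuousAt.clog hinner
  rw [hexp, Complex.mem_slitPlane_iff]
  right
  rw [S7.im_q]
  apply div_ne_zero
  · simp only [Complex.mul_im, Complex.ofReal_re, Complex.I_im, Complex.ofReal_im,
      Complex.I_re, mul_zero, mul_one, zero_mul, add_zero]
    intro h
    rcases mul_eq_zero.mp h with h1 | h1
    · rcases mul_eq_zero.mp h1 with h2 | h2
      · norm_num at h2
      · linarith
    · exact hc h1
  · intro h
    exact hden (by rw [hexp]; exact Complex.normSq_eq_zero.mp h)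

lemma S7.exp_half_log_sub (A : ℝ) (hA : 0 < A) :
    Complex.exp ((↑(Real.log A) - ↑Real.pi * Complex.I) * (2:ℂ)⁻¹)
      = -(Real.sqrt A : ℂ) * Complex.I := by
  have h : ((Real.log A : ℂ) - ↑Real.pi * Complex.I) * (2:ℂ)⁻¹
      = ((Real.log A/2 : ℝ):ℂ) + ((-(Real.pi/2) : ℝ):ℂ) * Complex.I := by push_cast; ring
  rw [h, Complex.exp_add, ← Complex.ofReal_exp, Complex.exp_mul_I,
    ← Complex.ofReal_cos, ← Complex.ofReal_sin, Real.cos_neg, Real.sin_neg,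
    Real.cos_pi_div_two, Real.sin_pi_div_two,
    ← Real.log_sqrt hA.le, Real.exp_log (Real.sqrt_pos.mpr hA)]
  push_cast
  ring

lemma S7.exp_half_log_add (A : ℝ) (hA : 0 < A) :
    Complex.exp ((↑(Real.log A) + ↑Real.pi * Complex.I) * (2:ℂ)⁻¹)
      = (Real.sqrt A : ℂ) * Complex.I := by
  have h : ((Real.log A : ℂ) + ↑Real.pi * Complex.I) * (2:ℂ)⁻¹
      = ((Real.log A/2 : ℝ):ℂ) + (((Real.pi/2) : ℝ):ℂ) * Complex.I := by push_cast; ring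
  rw [h, Complex.exp_add, ← Complex.ofReal_exp, Complex.exp_mul_I,
    ← Complex.ofReal_cos, ← Complex.ofReal_sin,
    Real.cos_pi_div_two, Real.sin_pi_div_two,
    ← Real.log_sqrt hA.le, Real.exp_log (Real.sqrt_pos.mpr hA)]
  push_cast
  ring
end S7helpers

set_option maxHeartbeats 2000000 in
/-- properties of the degenerate Abelian integral
`F(x) = log((r(x*) − r(x))/(r(x*) + r(x)))` with
`r(x) = √((x−α)/(x−β)) = √((x−α)(x−β))/(x−β)` (branch cut `[α,β]`, realized
by the principal power), and the principal branch of the logarithm. -/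
theorem stmt7 (α β xstar : ℝ) (hαβ : α < β) (hβx : β < xstar)
    (r : ℂ → ℂ) (hr : ∀ z : ℂ, r z = ((z - (α:ℂ))/(z - (β:ℂ))) ^ ((2:ℂ)⁻¹))
    (F : ℂ → ℂ)
    (hF : ∀ z : ℂ, F z = Complex.log ((r (xstar:ℂ) - r z)/(r (xstar:ℂ) + r z)))
    (F₀ : ℂ)
    (hF₀ : F₀ = Complex.log ((r (xstar:ℂ) - 1)/(r (xstar:ℂ) + 1))) :
    -- (1) analyticity off the cut [α, x*]
    (∀ z : ℂ, z ∉ Complex.ofReal '' Set.Icc α xstar → AnalyticAt ℂ F z) ∧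
    -- (2) F₊ = −F₋ on (α, β)
    (∀ x ∈ Set.Ioo α β, ∃ Fp Fm : ℂ,
      Tendsto (fun ε : ℝ => F ((x:ℂ) + ε*Complex.I)) (nhdsWithin 0 (Set.Ioi 0)) (nhds Fp) ∧
      Tendsto (fun ε : ℝ => F ((x:ℂ) + ε*Complex.I)) (nhdsWithin 0 (Set.Iio 0)) (nhds Fm) ∧
      Fp = -Fm) ∧
    -- (3) F₊ = F₋ + 2πi on (β, x*)
    (∀ x ∈ Set.Ioo β xstar, ∃ Fp Fm : ℂ,
      Tendsto (fun ε : ℝ => F ((x:ℂ) + ε*Complex.I)) (nhdsWithin 0 (Set.Ioi 0)) (nhds Fp) ∧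
      Tendsto (fun ε : ℝ => F ((x:ℂ) + ε*Complex.I)) (nhdsWithin 0 (Set.Iio 0)) (nhds Fm) ∧
      Fp = Fm + 2*Real.pi*Complex.I) ∧
    -- (4) F(x) − log(x − x*) is bounded near x*
    (∃ M δ : ℝ, 0 < M ∧ 0 < δ ∧ ∀ z : ℂ, z ≠ (xstar:ℂ) → ‖z - (xstar:ℂ)‖ < δ →
      ‖F z - Complex.log (z - (xstar:ℂ))‖ ≤ M) ∧
    -- (5) F(x) → F₀ at infinity
    Tendsto F (Bornology.cobounded ℂ) (nhds F₀) ∧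
    -- (6) F bounded near α and near β
    (∃ M δ : ℝ, 0 < M ∧ 0 < δ ∧ ∀ z : ℂ,
      ((z ≠ (α:ℂ) ∧ ‖z - (α:ℂ)‖ < δ) ∨ (z ≠ (β:ℂ) ∧ ‖z - (β:ℂ)‖ < δ)) → ‖F z‖ ≤ M) := by
  
  have hxα : α < xstar := hαβ.trans hβx
  have hxb : (0:ℝ) < xstar - β := by linarith
  set tst : ℝ := (xstar - α)/(xstar - β) with htst
  have htst1 : 1 < tst := by rw [htst, lt_div_iff₀ hxb]; linarith
  have htst0 : 0 < tst := by linarith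
  set s : ℝ := Real.sqrt tst with hsdef
  have hs1 : 1 < s := by
    rw [hsdef]
    rw [show (1:ℝ) = Real.sqrt 1 by simp]
    exact Real.sqrt_lt_sqrt (by norm_num) htst1
  have hs0 : (0:ℝ) < s := by linarith
  have hrstar : r (xstar:ℂ) = (s:ℂ) := by
    rw [hr]
    have h1 : ((xstar:ℂ) - α)/((xstar:ℂ) - β) = ((tst:ℝ):ℂ) := by
      rw [htst]; push_cast; ring
    rw [h1, S7.ofReal_half htst0.le]
  have hssq : (s:ℂ) * (s:ℂ) = ((tst:ℝ):ℂ) := by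
    norm_cast
    exact Real.mul_self_sqrt htst0.le
  have hre_r : ∀ z, 0 ≤ (r z).re := fun z => by rw [hr]; exact S7.re_half_nonneg _
  have hden : ∀ z, (s:ℂ) + r z ≠ 0 := by
    intro z h
    have h2 : ((s:ℂ) + r z).re = 0 := by rw [h]; rfl
    rw [Complex.add_re, Complex.ofReal_re] at h2
    linarith [hre_r z]
  have habs_den : ∀ z, s ≤ Complex.abs ((s:ℂ) + r z) := by
    intro z
    calc s ≤ ((s:ℂ) + r z).re := by
          rw [Complex.add_re, Complex.ofReal_re]; linarith [hre_r z]
      _ ≤ Complex.abs ((s:ℂ) + r z) := Complex.re_le_norm _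
  have hsq_r : ∀ z, r z * r z = (z - (α:ℂ))/(z - (β:ℂ)) := fun z => by
    rw [hr]; exact S7.sq_half _
  have habs_r : ∀ z, Complex.abs (r z)
      = Real.sqrt (Complex.abs ((z - (α:ℂ))/(z - (β:ℂ)))) := by
    intro z
    rw [hr, S7.abs_half, Real.sqrt_eq_rpow]
    norm_num
  have hFeq : ∀ z, F z = Complex.log (((s:ℂ) - r z)/((s:ℂ) + r z)) := fun z => by
    rw [hF, hrstar]
  have hdiff : ∀ z, ((s:ℂ) - r z) * ((s:ℂ) + r z)
      = ((tst:ℝ):ℂ) - (z - (α:ℂ))/(z - (β:ℂ)) := by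
    intro z
    linear_combination hssq - hsq_r z
  have hcut : ∀ z : ℂ, z ≠ (β:ℂ) → ((tst:ℝ):ℂ) - (z - (α:ℂ))/(z - (β:ℂ))
      = ((β:ℂ) - α)*(z - xstar)/((((xstar:ℂ)) - β)*(z - β)) := by
    intro z hz
    have hz' : z - (β:ℂ) ≠ 0 := sub_ne_zero.mpr hz
    have hxb' : (xstar:ℂ) - β ≠ 0 := by
      intro h
      have := sub_eq_zero.mp h
      exact (by linarith : xstar ≠ β) (by exact_mod_cast this)
    rw [htst]
    push_cast
    field_simp
    ring
  have hr_eq_s : ∀ z : ℂ, r z = (s:ℂ) → z = (xstar:ℂ) := by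
    intro z h
    have hβc : z ≠ (β:ℂ) := by
      intro hzb
      have h0 : r z * r z = 0 := by rw [hsq_r, hzb]; simp
      rw [h] at h0
      have : (s:ℝ) * s ≠ 0 := by positivity
      exact this (by exact_mod_cast h0)
    have h1 := hdiff z
    rw [h] at h1
    simp only [sub_self, zero_mul] at h1
    rw [hcut z hβc] at h1
    have h2 : ((β:ℂ) - α)*(z - xstar) = 0 := by
      have hz' : z - (β:ℂ) ≠ 0 := sub_ne_zero.mpr hβc
      have hxb' : (xstar:ℂ) - β ≠ 0 := by
        intro h'
        have := sub_eq_zero.mp h'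
        exact (by linarith : xstar ≠ β) (by exact_mod_cast this)
      rcases div_eq_zero_iff.mp h1.symm with h1 | h1
      · exact h1
      · exact absurd h1 (mul_ne_zero hxb' hz')
    rcases mul_eq_zero.mp h2 with h3 | h3
    · exfalso
      have : (β:ℂ) = (α:ℂ) := sub_eq_zero.mp h3
      have : β = α := by exact_mod_cast this
      linarith
    · exact sub_eq_zero.mp h3
  refine ⟨?_, ?_, ?_, ?_, ?_, ?_⟩
  · -- (1) analyticity
    intro z hz
    have hzβ : z ≠ (β:ℂ) := by
      intro h; exact hz ⟨β, ⟨hαβ.le, hβx.le⟩, h.symm⟩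
    have hzcut : z ∉ Complex.ofReal '' Set.Icc α β := by
      rintro ⟨y, hy, hyz⟩
      exact hz ⟨y, ⟨hy.1, hy.2.trans hβx.le⟩, hyz⟩
    have ht_an : AnalyticAt ℂ (fun w : ℂ => (w - (α:ℂ))/(w - (β:ℂ))) z := by
      exact (analyticAt_id.sub analyticAt_const).div
        (analyticAt_id.sub analyticAt_const) (sub_ne_zero.mpr hzβ)
    have ht_slit := S7.t_slitPlane hαβ hzcut
    have hr_an : AnalyticAt ℂ r z := by
      have hfun : r = fun w : ℂ => ((w - (α:ℂ))/(w - (β:ℂ))) ^ ((2:ℂ)⁻¹) := funext hr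
      rw [hfun]
      exact ht_an.cpow analyticAt_const ht_slit
    have hq_slit : ((s:ℂ) - r z)/((s:ℂ) + r z) ∈ Complex.slitPlane := by
      rw [Complex.mem_slitPlane_iff]
      by_cases him : (r z).im = 0
      · left
        set ρ := (r z).re with hρ
        have hrz : r z = ((ρ:ℝ):ℂ) := Complex.ext rfl (by simp [him])
        have htz : (z - (α:ℂ))/(z - (β:ℂ)) = ((ρ*ρ : ℝ):ℂ) := by
          rw [← hsq_r, hrz]; push_cast; ring
        have hzim : z.im = 0 := by
          by_contra hzim
          have h1 : ((z - (α:ℂ))/(z - (β:ℂ))).im = 0 := by rw [htz]; simp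
          rw [S7.im_div] at h1
          have hzb' : z - (β:ℂ) ≠ 0 := fun h => hzim (by
            rw [show z = (β:ℂ) from by linear_combination h]; simp)
          have hN : Complex.normSq (z - (β:ℂ)) ≠ 0 :=
            fun h => hzb' (Complex.normSq_eq_zero.mp h)
          rcases div_eq_zero_iff.mp h1 with h2 | h2
          · rcases mul_eq_zero.mp h2 with h3 | h3
            · exact absurd h3 (by intro h4; linarith)
            · exact hzim h3
          · exact hN h2
        have hzx : z = ((z.re:ℝ):ℂ) := Complex.ext rfl (by simp [hzim])
        set x := z.re with hx
        have hxmem : x ∉ Set.Icc α xstar := fun h => hz ⟨x, h, hzx.symm⟩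
        rw [Set.mem_Icc] at hxmem; push_neg at hxmem
        have hρ0 : 0 ≤ ρ := hre_r z
        have hxcast : ((x:ℂ) - (α:ℂ))/((x:ℂ) - (β:ℂ)) = (((x - α)/(x - β) : ℝ):ℂ) := by
          push_cast; ring
        have htx : ρ * ρ = (x - α)/(x - β) := by
          have h5 : (((x - α)/(x - β) : ℝ):ℂ) = ((ρ*ρ : ℝ):ℂ) := by
            rw [← hxcast, ← hzx]; exact htz
          exact (Complex.ofReal_inj.mp h5).symm
        have htlt : (x - α)/(x - β) < tst := by
          rcases lt_or_ge x α with hc | hc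
          · have hxβ : x - β < 0 := by linarith
            have h6 : (x - α)/(x - β) < 1 := by
              rw [div_lt_one_of_neg hxβ]; linarith
            linarith
          · have hc2 : xstar < x := hxmem hc
            have hxβ : 0 < x - β := by linarith
            rw [htst, div_lt_div_iff₀ hxβ hxb]
            nlinarith
        have hρs : ρ < s := by
          have hsts : s * s = tst := Real.mul_self_sqrt htst0.le
          nlinarith
        have hq : ((s:ℂ) - r z)/((s:ℂ) + r z) = (((s - ρ)/(s + ρ) : ℝ):ℂ) := by
          rw [hrz]; push_cast; ring_nf
        rw [hq, Complex.ofReal_re]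
        exact div_pos (by linarith) (by linarith)
      · right
        rw [S7.im_q]
        exact div_ne_zero (by simp [him]; positivity)
          (fun h => hden z (Complex.normSq_eq_zero.mp h))
    have hG : AnalyticAt ℂ (fun w => Complex.log (((s:ℂ) - r w)/((s:ℂ) + r w))) z :=
      AnalyticAt.clog ((analyticAt_const.sub hr_an).div
        (analyticAt_const.add hr_an) (hden z)) hq_slit
    have hFG : F = fun w => Complex.log (((s:ℂ) - r w)/((s:ℂ) + r w)) := funext hFeq
    rw [hFG]
    exact hG

  · -- (2)
    rintro x ⟨hxa, hxβ⟩
    have hxb' : x ≠ β := ne_of_lt hxβ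
    have ht₀neg : (x - α)/(x - β) < 0 := div_neg_of_pos_of_neg (by linarith) (by linarith)
    set A : ℝ := Complex.abs ((((x - α)/(x - β) : ℝ)):ℂ) with hA
    have hA0 : 0 < A := by rw [hA, Complex.abs_ofReal, abs_pos]; exact ne_of_lt ht₀neg
    set c : ℝ := Real.sqrt A with hc
    have hc0 : 0 < c := Real.sqrt_pos.mpr hA0
    have hre0 : ((((x - α)/(x - β) : ℝ)):ℂ).re < 0 := by
      rw [Complex.ofReal_re]; exact ht₀neg
    have him0 : ((((x - α)/(x - β) : ℝ)):ℂ).im = 0 := Complex.ofReal_im _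
    set T : ℝ → ℂ :=
      fun ε : ℝ => (((x:ℂ)+ε*Complex.I) - (α:ℂ))/(((x:ℂ)+ε*Complex.I) - (β:ℂ)) with hT
    set G : ℂ → ℂ := fun w => Complex.log
      (((s:ℂ) - Complex.exp (w * (2:ℂ)⁻¹))/((s:ℂ) + Complex.exp (w * (2:ℂ)⁻¹))) with hGdef
    have hTne : ∀ ε : ℝ, ε ≠ 0 → T ε ≠ 0 := by
      intro ε hε h
      rcases div_eq_zero_iff.mp h with h1 | h1
      · have h2 : (((x:ℂ)+ε*Complex.I) - (α:ℂ)).im = 0 := by rw [h1]; simp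
        simp at h2; exact hε h2
      · have h2 : (((x:ℂ)+ε*Complex.I) - (β:ℂ)).im = 0 := by rw [h1]; simp
        simp at h2; exact hε h2
    have hFT : ∀ ε : ℝ, ε ≠ 0 → F ((x:ℂ) + ε*Complex.I) = G (Complex.log (T ε)) := by
      intro ε hε
      rw [hFeq, hGdef]
      simp only [hT]
      rw [← Complex.cpow_def_of_ne_zero (hTne ε hε), hr]
    have hup : Tendsto (fun ε : ℝ => Complex.log (T ε))
        (nhdsWithin 0 (Set.Ioi 0)) (nhds ((Real.log A : ℂ) - Real.pi * Complex.I)) :=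
      (Complex.tendsto_log_nhdsWithin_im_neg_of_re_neg_of_im_zero hre0 him0).comp
        (S7.tendsto_t_above α β hαβ x hxb')
    have hdown : Tendsto (fun ε : ℝ => Complex.log (T ε))
        (nhdsWithin 0 (Set.Iio 0)) (nhds ((Real.log A : ℂ) + Real.pi * Complex.I)) :=
      (Complex.tendsto_log_nhdsWithin_im_nonneg_of_re_neg_of_im_zero hre0 him0).comp
        ((S7.tendsto_t_below α β hαβ x hxb').mono_right
          (nhdsWithin_mono _ (fun w (hw : w ∈ {w : ℂ | 0 < w.im}) => (le_of_lt hw : 0 ≤ w.im))))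
    have hexpUp : Complex.exp (((Real.log A : ℂ) - Real.pi * Complex.I) * (2:ℂ)⁻¹)
        = ((-c : ℝ):ℂ) * Complex.I := by
      rw [S7.exp_half_log_sub A hA0]; push_cast; ring
    have hexpDown : Complex.exp (((Real.log A : ℂ) + Real.pi * Complex.I) * (2:ℂ)⁻¹)
        = ((c : ℝ):ℂ) * Complex.I := S7.exp_half_log_add A hA0
    have hcontUp : ContinuousAt G ((Real.log A : ℂ) - Real.pi * Complex.I) := by
      rw [hGdef]
      exact S7.outer_continuousAt s hs0 (-c) (by linarith) _ hexpUp
    have hcontDown : ContinuousAt G ((Real.log A : ℂ) + Real.pi * Complex.I) := by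
      rw [hGdef]
      exact S7.outer_continuousAt s hs0 c (by linarith) _ hexpDown
    have hGup : G ((Real.log A : ℂ) - Real.pi * Complex.I)
        = Complex.log (((s:ℂ) + c*Complex.I)/((s:ℂ) - c*Complex.I)) := by
      rw [hGdef]
      simp only [hexpUp]
      congr 2 <;> push_cast <;> ring
    have hGdown : G ((Real.log A : ℂ) + Real.pi * Complex.I)
        = Complex.log (((s:ℂ) - c*Complex.I)/((s:ℂ) + c*Complex.I)) := by
      rw [hGdef]
      simp only [hexpDown]
    refine ⟨Complex.log (((s:ℂ) + c*Complex.I)/((s:ℂ) - c*Complex.I)),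
      Complex.log (((s:ℂ) - c*Complex.I)/((s:ℂ) + c*Complex.I)), ?_, ?_, ?_⟩
    · rw [← hGup]
      apply (hcontUp.tendsto.comp hup).congr'
      filter_upwards [self_mem_nhdsWithin] with ε (hε : 0 < ε)
      exact (hFT ε (ne_of_gt hε)).symm
    · rw [← hGdown]
      apply (hcontDown.tendsto.comp hdown).congr'
      filter_upwards [self_mem_nhdsWithin] with ε (hε : ε < 0)
      exact (hFT ε (ne_of_lt hε)).symm
    · -- Fp = -Fm
      have hconj1 : (starRingEnd ℂ) ((s:ℂ) + c*Complex.I) = (s:ℂ) - c*Complex.I := by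
        simp [Complex.ext_iff]
      have hconj2 : (starRingEnd ℂ) ((s:ℂ) - c*Complex.I) = (s:ℂ) + c*Complex.I := by
        simp [Complex.ext_iff]
      have hne1 : ((s:ℂ) - c*Complex.I) ≠ 0 := by
        intro h
        have h2 : (((s:ℂ) - c*Complex.I)).im = 0 := by rw [h]; simp
        simp at h2; linarith
      have hne2 : ((s:ℂ) + c*Complex.I) ≠ 0 := by
        intro h
        have h2 : (((s:ℂ) + c*Complex.I)).im = 0 := by rw [h]; simp
        simp at h2; linarith
      set w : ℂ := ((s:ℂ) + c*Complex.I)/((s:ℂ) - c*Complex.I) with hw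
      have habs1 : Complex.abs w = 1 := by
        rw [hw, map_div₀, ← hconj1, Complex.abs_conj]
        exact div_self (Complex.abs.ne_zero hne2)
      have himw : w.im ≠ 0 := by
        have hN : Complex.normSq ((s:ℂ) - c*Complex.I) ≠ 0 :=
          fun h => hne1 (Complex.normSq_eq_zero.mp h)
        rw [hw, Complex.div_im, div_sub_div_same]
        apply div_ne_zero _ hN
        simp only [Complex.add_im, Complex.add_re, Complex.sub_re, Complex.sub_im,
          Complex.mul_im, Complex.mul_re, Complex.ofReal_re, Complex.ofReal_im,
          Complex.I_re, Complex.I_im]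
        ring_nf
        positivity
      have hargw : w.arg ≠ Real.pi := by
        intro h
        rw [Complex.arg_eq_pi_iff] at h
        exact himw h.2
      have hFm : Complex.log (((s:ℂ) - c*Complex.I)/((s:ℂ) + c*Complex.I))
          = (starRingEnd ℂ) (Complex.log w) := by
        rw [← Complex.log_conj _ hargw]
        congr 1
        rw [hw, map_div₀, hconj1, hconj2]
      have hre0' : (Complex.log w).re = 0 := by rw [Complex.log_re, ← Complex.abs_apply, habs1, Real.log_one]
      rw [hFm]
      apply Complex.ext
      · simp [hre0']
      · simp
  · -- (3)
    rintro x ⟨hβx', hxx⟩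
    have hxb' : x ≠ β := (ne_of_lt hβx').symm
    have hxβpos : (0:ℝ) < x - β := by linarith
    set t₀ : ℝ := (x - α)/(x - β) with ht₀
    have ht₀pos : 0 < t₀ := div_pos (by linarith) hxβpos
    have ht₀gt : tst < t₀ := by
      rw [htst, ht₀, div_lt_div_iff₀ hxb hxβpos]
      nlinarith
    set R : ℝ := Real.sqrt t₀ with hR
    have hsR : s < R := by
      rw [hsdef, hR]
      exact Real.sqrt_lt_sqrt htst0.le ht₀gt
    have hR0 : 0 < R := by linarith
    set q₀ : ℝ := (s - R)/(s + R) with hq₀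
    have hq₀neg : q₀ < 0 := div_neg_of_neg_of_pos (by linarith) (by linarith)
    have hre0 : ((q₀:ℝ):ℂ).re < 0 := by rw [Complex.ofReal_re]; exact hq₀neg
    have him0 : ((q₀:ℝ):ℂ).im = 0 := Complex.ofReal_im _
    set T : ℝ → ℂ :=
      fun ε : ℝ => (((x:ℂ)+ε*Complex.I) - (α:ℂ))/(((x:ℂ)+ε*Complex.I) - (β:ℂ)) with hT
    set Q : ℝ → ℂ :=
      fun ε : ℝ => ((s:ℂ) - T ε ^ ((2:ℂ)⁻¹))/((s:ℂ) + T ε ^ ((2:ℂ)⁻¹)) with hQ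
    have hFQ : ∀ ε : ℝ, F ((x:ℂ) + ε*Complex.I) = Complex.log (Q ε) := by
      intro ε
      rw [hFeq, hQ]
      simp only [hT]
      rw [hr]
    -- continuity of Q at 0 (two-sided, along nhds)
    have hslit : (((t₀:ℝ)):ℂ) ∈ Complex.slitPlane := by
      rw [Complex.mem_slitPlane_iff]; left
      rw [Complex.ofReal_re]; exact ht₀pos
    have hval : (((t₀:ℝ)):ℂ) ^ ((2:ℂ)⁻¹) = ((R:ℝ):ℂ) := by
      rw [S7.ofReal_half ht₀pos.le, hR]
    have hcast : (((x - α)/(x - β) : ℝ):ℂ) = ((t₀:ℝ):ℂ) := by rw [ht₀]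
    have hrdenne : ((s:ℂ) + ((R:ℝ):ℂ)) ≠ 0 := by
      rw [← Complex.ofReal_add]
      intro h
      have := Complex.ofReal_eq_zero.mp h
      linarith
    have hq₀cast : ((s:ℂ) - ((R:ℝ):ℂ))/((s:ℂ) + ((R:ℝ):ℂ)) = ((q₀:ℝ):ℂ) := by
      rw [hq₀]; push_cast; ring
    have hQtendsto : ∀ (l : Filter ℝ), Tendsto T l (nhds (((t₀:ℝ)):ℂ)) →
        Tendsto Q l (nhds ((q₀:ℝ):ℂ)) := by
      intro l hl
      have hrT : Tendsto (fun ε => T ε ^ ((2:ℂ)⁻¹)) l (nhds (((R:ℝ)):ℂ)) := by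
        rw [← hval]
        exact hl.cpow tendsto_const_nhds hslit
      rw [← hq₀cast]
      exact (tendsto_const_nhds.sub hrT).div (tendsto_const_nhds.add hrT)
        (by rw [← Complex.ofReal_add] at hrdenne ⊢; exact hrdenne)
    have hTup := (S7.tendsto_t_above α β hαβ x hxb').mono_right nhdsWithin_le_nhds
    have hTdown := (S7.tendsto_t_below α β hαβ x hxb').mono_right nhdsWithin_le_nhds
    rw [show (((x - α)/(x - β) : ℝ):ℂ) = ((t₀:ℝ):ℂ) from hcast] at hTup hTdown
    -- eventual membership of Q in upper/lower closed half-planes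
    have hTim : ∀ ε : ℝ, ((T ε).im) = (α - β) * ε / Complex.normSq ((x:ℂ)+ε*Complex.I - β) := by
      intro ε
      rw [hT]
      simp only []
      rw [S7.im_div]
      congr 2
      simp
    have hmemUp : ∀ ε : ℝ, 0 < ε → (Q ε) ∈ {w : ℂ | 0 ≤ w.im} := by
      intro ε hε
      have hzb : ((x:ℂ)+ε*Complex.I - β) ≠ 0 := by
        intro h
        have h2 : (((x:ℂ)+ε*Complex.I - β)).im = 0 := by rw [h]; simp
        simp at h2; linarith
      have himT : (T ε).im < 0 := by
        rw [hTim]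
        exact div_neg_of_neg_of_pos (mul_neg_of_neg_of_pos (by linarith) hε)
          (Complex.normSq_pos.mpr hzb)
      have himr : (T ε ^ ((2:ℂ)⁻¹)).im < 0 := S7.im_half_neg himT
      show 0 ≤ (Q ε).im
      rw [hQ]
      simp only []
      rw [S7.im_q]
      apply div_nonneg _ (Complex.normSq_nonneg _)
      nlinarith
    have hmemDown : ∀ ε : ℝ, ε < 0 → (Q ε) ∈ {w : ℂ | w.im < 0} := by
      intro ε hε
      have hzb : ((x:ℂ)+ε*Complex.I - β) ≠ 0 := by
        intro h
        have h2 : (((x:ℂ)+ε*Complex.I - β)).im = 0 := by rw [h]; simp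
        simp at h2; linarith
      have himT : 0 < (T ε).im := by
        rw [hTim]
        exact div_pos (mul_pos_of_neg_of_neg (by linarith) hε) (Complex.normSq_pos.mpr hzb)
      have himr : 0 < (T ε ^ ((2:ℂ)⁻¹)).im := S7.im_half_pos himT
      have hdenQ : (s:ℂ) + T ε ^ ((2:ℂ)⁻¹) ≠ 0 := by
        intro h
        have h2 : ((s:ℂ) + T ε ^ ((2:ℂ)⁻¹)).re = 0 := by rw [h]; rfl
        rw [Complex.add_re, Complex.ofReal_re] at h2
        linarith [S7.re_half_nonneg (T ε)]
      show (Q ε).im < 0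
      rw [hQ]
      simp only []
      rw [S7.im_q]
      apply div_neg_of_neg_of_pos
      · nlinarith
      · exact Complex.normSq_pos.mpr hdenQ
    have hQup : Tendsto Q (nhdsWithin 0 (Set.Ioi 0))
        (nhdsWithin ((q₀:ℝ):ℂ) {w : ℂ | 0 ≤ w.im}) := by
      rw [tendsto_nhdsWithin_iff]
      refine ⟨hQtendsto _ hTup, ?_⟩
      filter_upwards [self_mem_nhdsWithin] with ε (hε : 0 < ε)
      exact hmemUp ε hε
    have hQdown : Tendsto Q (nhdsWithin 0 (Set.Iio 0))
        (nhdsWithin ((q₀:ℝ):ℂ) {w : ℂ | w.im < 0}) := by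
      rw [tendsto_nhdsWithin_iff]
      refine ⟨hQtendsto _ hTdown, ?_⟩
      filter_upwards [self_mem_nhdsWithin] with ε (hε : ε < 0)
      exact hmemDown ε hε
    refine ⟨(Real.log (Complex.abs ((q₀:ℝ):ℂ)) : ℂ) + Real.pi * Complex.I,
      (Real.log (Complex.abs ((q₀:ℝ):ℂ)) : ℂ) - Real.pi * Complex.I, ?_, ?_, ?_⟩
    · apply Tendsto.congr' _
        ((Complex.tendsto_log_nhdsWithin_im_nonneg_of_re_neg_of_im_zero hre0 him0).comp hQup)
      filter_upwards with ε
      exact (hFQ ε).symm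
    · apply Tendsto.congr' _
        ((Complex.tendsto_log_nhdsWithin_im_neg_of_re_neg_of_im_zero hre0 him0).comp hQdown)
      filter_upwards with ε
      exact (hFQ ε).symm
    · ring

  · -- (4) boundedness near xstar
    set C : ℝ := (xstar - α + 1)/((xstar - β)/2) with hC
    have hC0 : 0 < C := by
      rw [hC]; apply div_pos <;> [linarith; linarith]
    set K : ℝ := s + Real.sqrt C with hK
    have hK1 : 1 ≤ K := by
      rw [hK]; have := Real.sqrt_nonneg C; linarith
    set m₁ : ℝ := (β-α)/((xstar-β) * ((xstar-β)+1) * K^2) with hm₁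
    set m₂ : ℝ := (β-α)/((xstar-β) * ((xstar-β)/2) * 1) with hm₂
    have hm₁0 : 0 < m₁ := by
      rw [hm₁]; apply div_pos (by linarith); positivity
    have hm₂0 : 0 < m₂ := by
      rw [hm₂]; apply div_pos (by linarith); positivity
    refine ⟨|Real.log m₁| + |Real.log m₂| + 2*Real.pi + 1, min ((xstar - β)/2) 1,
      by positivity, by positivity, ?_⟩
    intro z hz1 hz2
    have hδ1 : ‖z - (xstar:ℂ)‖ < (xstar - β)/2 := lt_of_lt_of_le hz2 (min_le_left _ _)
    have hδ2 : ‖z - (xstar:ℂ)‖ < 1 := lt_of_lt_of_le hz2 (min_le_right _ _)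
    have habs_xb : Complex.abs ((xstar:ℂ) - (β:ℂ)) = xstar - β := by
      rw [← Complex.ofReal_sub, Complex.abs_ofReal, abs_of_pos (by linarith)]
    have habs_xa : Complex.abs ((xstar:ℂ) - (α:ℂ)) = xstar - α := by
      rw [← Complex.ofReal_sub, Complex.abs_ofReal, abs_of_pos (by linarith)]
    have htri1 : Complex.abs ((xstar:ℂ) - β) ≤ Complex.abs ((xstar:ℂ) - z) + Complex.abs (z - β) := by
      calc Complex.abs ((xstar:ℂ) - β) = Complex.abs (((xstar:ℂ) - z) + (z - β)) := by
            congr 1; ring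
        _ ≤ _ := Complex.abs.add_le _ _
    have habs_sym : Complex.abs ((xstar:ℂ) - z) = ‖z - (xstar:ℂ)‖ := by
      rw [show (xstar:ℂ) - z = -(z - (xstar:ℂ)) from by ring, Complex.abs.map_neg]
      rfl
    set D : ℝ := Complex.abs (z - (β:ℂ)) with hD
    have hD1 : (xstar - β)/2 ≤ D := by
      rw [habs_xb, habs_sym] at htri1
      linarith
    have hD2 : D ≤ (xstar - β) + 1 := by
      calc D = Complex.abs ((z - xstar) + ((xstar:ℂ) - β)) := by rw [hD]; congr 1; ring
        _ ≤ Complex.abs (z - xstar) + Complex.abs ((xstar:ℂ) - β) := Complex.abs.add_le _ _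
        _ ≤ (xstar - β) + 1 := by rw [habs_xb]; have := hδ2; rw [show ‖z - (xstar:ℂ)‖ = Complex.abs (z - xstar) from rfl] at this; linarith
    have hD0 : 0 < D := by linarith
    have hzβ : z ≠ (β:ℂ) := by
      intro h
      rw [hD, h] at hD0
      simp at hD0
    have hzβ' : z - (β:ℂ) ≠ 0 := sub_ne_zero.mpr hzβ
    have hxβ' : (xstar:ℂ) - (β:ℂ) ≠ 0 := by
      intro h
      rw [← Complex.ofReal_sub, Complex.ofReal_eq_zero] at h
      linarith
    set E : ℝ := Complex.abs ((s:ℂ) + r z) with hE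
    have hE1 : 1 ≤ E := le_trans hs1.le (habs_den z)
    have hE2 : E ≤ K := by
      have h1 : E ≤ s + Complex.abs (r z) := by
        rw [hE]
        calc Complex.abs ((s:ℂ) + r z) ≤ Complex.abs ((s:ℂ)) + Complex.abs (r z) :=
              Complex.abs.add_le _ _
          _ = s + Complex.abs (r z) := by rw [Complex.abs_ofReal, abs_of_pos hs0]
      have h2 : Complex.abs (r z) ≤ Real.sqrt C := by
        rw [habs_r]
        apply Real.sqrt_le_sqrt
        rw [map_div₀]
        have hza : Complex.abs (z - (α:ℂ)) ≤ xstar - α + 1 := by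
          calc Complex.abs (z - α) = Complex.abs ((z - xstar) + ((xstar:ℂ) - α)) := by
                congr 1; ring
            _ ≤ Complex.abs (z - xstar) + Complex.abs ((xstar:ℂ) - α) := Complex.abs.add_le _ _
            _ ≤ xstar - α + 1 := by
                rw [habs_xa]
                have := hδ2
                rw [show ‖z - (xstar:ℂ)‖ = Complex.abs (z - xstar) from rfl] at this
                linarith
        rw [hC]
        exact div_le_div₀ (by linarith) hza (by linarith) hD1
      rw [hK]; linarith
    have hb0 : (0:ℝ) < ‖z - (xstar:ℂ)‖ := by
      rw [norm_pos_iff]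
      exact sub_ne_zero.mpr hz1
    have hsr_ne : (s:ℂ) - r z ≠ 0 := by
      intro h
      exact hz1 (hr_eq_s z (by linear_combination -h))
    have hq_ne : ((s:ℂ) - r z)/((s:ℂ) + r z) ≠ 0 := div_ne_zero hsr_ne (hden z)
    have hcut' : (((tst:ℝ):ℂ) - (z - (α:ℂ))/(z - (β:ℂ))) * (((xstar:ℂ) - β)*(z - β))
        = ((β:ℂ) - α)*(z - xstar) := by
      rw [hcut z hzβ]
      field_simp
    have hden2 : (((xstar:ℂ)) - β)*(z - β)*((s:ℂ)+r z)^2 ≠ 0 :=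
      mul_ne_zero (mul_ne_zero hxβ' hzβ') (pow_ne_zero 2 (hden z))
    have hqform : ((s:ℂ) - r z)/((s:ℂ) + r z)
        = ((β:ℂ)-α)*(z - xstar)/((((xstar:ℂ)) - β)*(z - β)*((s:ℂ)+r z)^2) := by
      rw [div_eq_div_iff (hden z) hden2]
      linear_combination ((((xstar:ℂ))-β)*(z-β)*((s:ℂ)+r z)) * hdiff z
        + ((s:ℂ)+r z) * hcut'
    have habs_ba : Complex.abs ((β:ℂ)-(α:ℂ)) = β - α := by
      rw [← Complex.ofReal_sub, Complex.abs_ofReal, abs_of_pos (by linarith)]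
    have habsq : Complex.abs (((s:ℂ) - r z)/((s:ℂ) + r z))
        = (β - α) * ‖z - (xstar:ℂ)‖ / ((xstar - β) * D * E^2) := by
      rw [hqform, map_div₀, map_mul, map_mul, map_mul, map_pow, habs_ba, habs_xb]
      rfl
    have hm_eq : Complex.abs (((s:ℂ) - r z)/((s:ℂ) + r z)) / ‖z - (xstar:ℂ)‖
        = (β-α)/((xstar-β)*D*E^2) := by
      rw [habsq, div_div, mul_comm ((xstar-β)*D*E^2) ‖z - (xstar:ℂ)‖,
        mul_comm (β-α) ‖z - (xstar:ℂ)‖, mul_div_mul_left _ _ hb0.ne']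
    have hE0 : 0 < E := by linarith
    have hE2sq : E^2 ≤ K^2 := pow_le_pow_left₀ hE0.le hE2 2
    have hE1sq : 1 ≤ E^2 := by nlinarith
    have hm_le : (β-α)/((xstar-β)*D*E^2) ≤ m₂ := by
      rw [hm₂]
      apply div_le_div_of_nonneg_left (by linarith) (by positivity) ?_
      have a1 : (xstar-β)*((xstar-β)/2) ≤ (xstar-β)*D := mul_le_mul_of_nonneg_left hD1 hxb.le
      have a2 : ((xstar-β)*D)*1 ≤ ((xstar-β)*D)*E^2 :=
        mul_le_mul_of_nonneg_left hE1sq (by positivity)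
      nlinarith
    have hm_ge : m₁ ≤ (β-α)/((xstar-β)*D*E^2) := by
      rw [hm₁]
      apply div_le_div_of_nonneg_left (by linarith) (by positivity) ?_
      have b1 : (xstar-β)*D ≤ (xstar-β)*((xstar-β)+1) := mul_le_mul_of_nonneg_left hD2 hxb.le
      have b2 : ((xstar-β)*D)*E^2 ≤ ((xstar-β)*((xstar-β)+1))*K^2 :=
        mul_le_mul b1 hE2sq (by positivity) (by positivity)
      nlinarith
    have hm0 : 0 < (β-α)/((xstar-β)*D*E^2) := by
      apply div_pos (by linarith)
      positivity
    have hlog1 : Real.log m₁ ≤ Real.log ((β-α)/((xstar-β)*D*E^2)) :=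
      Real.log_le_log hm₁0 hm_ge
    have hlog2 : Real.log ((β-α)/((xstar-β)*D*E^2)) ≤ Real.log m₂ :=
      Real.log_le_log hm0 hm_le
    have hlogabs : |Real.log ((β-α)/((xstar-β)*D*E^2))| ≤ |Real.log m₁| + |Real.log m₂| := by
      rw [abs_le]
      constructor
      · have h1 := neg_abs_le (Real.log m₁)
        have h2 := abs_nonneg (Real.log m₂)
        linarith
      · have h1 := le_abs_self (Real.log m₂)
        have h2 := abs_nonneg (Real.log m₁)
        linarith
    rw [hFeq z]
    have hnorm := Complex.norm_le_abs_re_add_abs_im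
      (Complex.log (((s:ℂ) - r z)/((s:ℂ) + r z)) - Complex.log (z - (xstar:ℂ)))
    have hre_part : (Complex.log (((s:ℂ) - r z)/((s:ℂ) + r z))
        - Complex.log (z - (xstar:ℂ))).re = Real.log ((β-α)/((xstar-β)*D*E^2)) := by
      rw [Complex.sub_re, Complex.log_re, Complex.log_re, ← hm_eq,
        Real.log_div (Complex.abs.ne_zero hq_ne) hb0.ne']
      rfl
    have him_part : |(Complex.log (((s:ℂ) - r z)/((s:ℂ) + r z))
        - Complex.log (z - (xstar:ℂ))).im| ≤ 2*Real.pi := by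
      rw [Complex.sub_im, Complex.log_im, Complex.log_im]
      have h1 := Complex.abs_arg_le_pi (((s:ℂ) - r z)/((s:ℂ) + r z))
      have h2 := Complex.abs_arg_le_pi (z - (xstar:ℂ))
      have := abs_sub (Complex.arg (((s:ℂ) - r z)/((s:ℂ) + r z))) (Complex.arg (z - (xstar:ℂ)))
      linarith
    calc ‖Complex.log (((s:ℂ) - r z)/((s:ℂ) + r z)) - Complex.log (z - (xstar:ℂ))‖
        ≤ |(Complex.log (((s:ℂ) - r z)/((s:ℂ) + r z)) - Complex.log (z - (xstar:ℂ))).re|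
          + |(Complex.log (((s:ℂ) - r z)/((s:ℂ) + r z)) - Complex.log (z - (xstar:ℂ))).im| :=
          hnorm
      _ ≤ (|Real.log m₁| + |Real.log m₂|) + 2*Real.pi := by
          rw [hre_part]
          exact add_le_add hlogabs him_part
      _ ≤ |Real.log m₁| + |Real.log m₂| + 2*Real.pi + 1 := by linarith

  · -- (5) limit at infinity
    have hF₀eq : F₀ = Complex.log (((s:ℂ) - 1)/((s:ℂ) + 1)) := by rw [hF₀, hrstar]
    have hnorm_sub : Tendsto (fun z : ℂ => ‖z - (β:ℂ)‖) (Bornology.cobounded ℂ) atTop := by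
      apply tendsto_atTop_mono (fun z => norm_sub_norm_le z ((β:ℝ):ℂ))
      have h := tendsto_atTop_add_const_right (Bornology.cobounded ℂ) (-‖((β:ℝ):ℂ)‖)
        tendsto_norm_cobounded_atTop
      apply h.congr
      intro z
      ring
    have hsub : Tendsto (fun z : ℂ => z - (β:ℂ)) (Bornology.cobounded ℂ)
        (Bornology.cobounded ℂ) := by
      rw [← tendsto_norm_atTop_iff_cobounded]
      exact hnorm_sub
    have hinv : Tendsto (fun z : ℂ => (z - (β:ℂ))⁻¹) (Bornology.cobounded ℂ) (nhds 0) :=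
      Filter.tendsto_inv₀_cobounded.comp hsub
    have h1 : Tendsto (fun z : ℂ => (z - (α:ℂ))/(z - (β:ℂ))) (Bornology.cobounded ℂ)
        (nhds 1) := by
      have h2 : Tendsto (fun z : ℂ => 1 + ((β:ℂ)-(α:ℂ)) * (z - (β:ℂ))⁻¹)
          (Bornology.cobounded ℂ) (nhds (1 + ((β:ℂ)-(α:ℂ)) * 0)) :=
        tendsto_const_nhds.add (tendsto_const_nhds.mul hinv)
      rw [show (1:ℂ) + ((β:ℂ)-(α:ℂ)) * 0 = 1 by ring] at h2
      apply h2.congr'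
      filter_upwards [Bornology.eventually_ne_cobounded ((β:ℝ):ℂ)] with z hz
      have hzβ : z - (β:ℂ) ≠ 0 := sub_ne_zero.mpr hz
      field_simp
      ring
    have hr1 : Tendsto r (Bornology.cobounded ℂ) (nhds 1) := by
      have hfun : r = fun w : ℂ => ((w - (α:ℂ))/(w - (β:ℂ))) ^ ((2:ℂ)⁻¹) := funext hr
      rw [hfun]
      have := h1.cpow (tendsto_const_nhds (x := ((2:ℂ)⁻¹)))
        (by rw [Complex.mem_slitPlane_iff]; left; norm_num)
      rwa [Complex.one_cpow] at this
    have hs1ne : (s:ℂ) + 1 ≠ 0 := by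
      rw [show ((s:ℂ) + 1) = ((s + 1 : ℝ):ℂ) by push_cast; ring]
      rw [Complex.ofReal_ne_zero]
      linarith
    have hq : Tendsto (fun z : ℂ => ((s:ℂ) - r z)/((s:ℂ) + r z)) (Bornology.cobounded ℂ)
        (nhds (((s:ℂ) - 1)/((s:ℂ) + 1))) :=
      (tendsto_const_nhds.sub hr1).div (tendsto_const_nhds.add hr1) hs1ne
    have hslit : ((s:ℂ) - 1)/((s:ℂ) + 1) ∈ Complex.slitPlane := by
      rw [show (((s:ℂ) - 1)/((s:ℂ) + 1)) = (((s-1)/(s+1) : ℝ):ℂ) by push_cast; ring,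
        Complex.mem_slitPlane_iff]
      left
      rw [Complex.ofReal_re]
      apply div_pos <;> linarith
    have hlog : Tendsto F (Bornology.cobounded ℂ) (nhds (Complex.log (((s:ℂ)-1)/((s:ℂ)+1)))) := by
      have := (continuousAt_clog hslit).tendsto.comp hq
      apply this.congr
      intro z
      exact (hFeq z).symm
    rw [hF₀eq]
    exact hlog

  · -- (6) boundedness near α and β
    have hlog3 : (0:ℝ) < Real.log 3 := Real.log_pos (by norm_num)
    have hs2 : (1:ℝ) ≤ s^2 := by nlinarith
    refine ⟨Real.log 3 + Real.pi, (β - α)/(8*s^2),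
      by linarith [Real.pi_pos], div_pos (by linarith) (by nlinarith), ?_⟩
    intro z hz
    have hδle : (β - α)/(8*s^2) ≤ (β - α)/2 := by
      apply div_le_div_of_nonneg_left (by linarith) (by norm_num) (by nlinarith)
    have habs_ba : Complex.abs ((β:ℂ)-(α:ℂ)) = β - α := by
      rw [← Complex.ofReal_sub, Complex.abs_ofReal, abs_of_pos (by linarith)]
    -- establish bounds on |q z|
    have key : 1/3 ≤ Complex.abs (((s:ℂ) - r z)/((s:ℂ) + r z)) ∧
        Complex.abs (((s:ℂ) - r z)/((s:ℂ) + r z)) ≤ 3 := by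
      have hb0 : (0:ℝ) < Complex.abs ((s:ℂ) + r z) := lt_of_lt_of_le hs0 (habs_den z)
      have htri_s1 : s ≤ Complex.abs ((s:ℂ) - r z) + Complex.abs (r z) := by
        calc s = Complex.abs ((s:ℂ)) := by rw [Complex.abs_ofReal, abs_of_pos hs0]
          _ = Complex.abs (((s:ℂ) - r z) + r z) := by congr 1; ring
          _ ≤ _ := Complex.abs.add_le _ _
      have htri_s2 : Complex.abs ((s:ℂ) - r z) ≤ s + Complex.abs (r z) := by
        calc Complex.abs ((s:ℂ) - r z) ≤ Complex.abs ((s:ℂ)) + Complex.abs (r z) := by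
              rw [sub_eq_add_neg]
              exact le_trans (Complex.abs.add_le _ _) (by rw [Complex.abs.map_neg])
          _ = s + Complex.abs (r z) := by rw [Complex.abs_ofReal, abs_of_pos hs0]
      have htri_s3 : Complex.abs ((s:ℂ) + r z) ≤ s + Complex.abs (r z) := by
        calc Complex.abs ((s:ℂ) + r z) ≤ Complex.abs ((s:ℂ)) + Complex.abs (r z) :=
              Complex.abs.add_le _ _
          _ = s + Complex.abs (r z) := by rw [Complex.abs_ofReal, abs_of_pos hs0]
      have htri_r1 : Complex.abs (r z) ≤ Complex.abs ((s:ℂ) - r z) + s := by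
        calc Complex.abs (r z) = Complex.abs (-((s:ℂ) - r z) + (s:ℂ)) := by congr 1; ring
          _ ≤ Complex.abs (-((s:ℂ) - r z)) + Complex.abs ((s:ℂ)) := Complex.abs.add_le _ _
          _ = Complex.abs ((s:ℂ) - r z) + s := by
              rw [Complex.abs.map_neg, Complex.abs_ofReal, abs_of_pos hs0]
      have htri_r2 : Complex.abs (r z) ≤ Complex.abs ((s:ℂ) + r z) + s := by
        calc Complex.abs (r z) = Complex.abs (((s:ℂ) + r z) + (-(s:ℂ))) := by congr 1; ring
          _ ≤ Complex.abs ((s:ℂ) + r z) + Complex.abs (-(s:ℂ)) := Complex.abs.add_le _ _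
          _ = Complex.abs ((s:ℂ) + r z) + s := by
              rw [Complex.abs.map_neg, Complex.abs_ofReal, abs_of_pos hs0]
      rcases hz with ⟨hzα, hzd⟩ | ⟨hzβ, hzd⟩
      · -- near α : |r z| small
        have hzd2 : ‖z - (α:ℂ)‖ < (β - α)/2 := lt_of_lt_of_le hzd hδle
        have hDβ : (β - α)/2 ≤ Complex.abs (z - (β:ℂ)) := by
          have htri : Complex.abs ((β:ℂ) - (α:ℂ))
              ≤ Complex.abs ((β:ℂ) - z) + Complex.abs (z - (α:ℂ)) := by
            calc Complex.abs ((β:ℂ) - (α:ℂ)) = Complex.abs (((β:ℂ) - z) + (z - (α:ℂ))) := by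
                  congr 1; ring
              _ ≤ _ := Complex.abs.add_le _ _
          rw [habs_ba] at htri
          have hsym : Complex.abs ((β:ℂ) - z) = Complex.abs (z - (β:ℂ)) := by
            rw [show (β:ℂ) - z = -(z - (β:ℂ)) from by ring, Complex.abs.map_neg]
          rw [hsym] at htri
          have : Complex.abs (z - (α:ℂ)) < (β - α)/2 := hzd2
          linarith
        have htabs : Complex.abs ((z - (α:ℂ))/(z - (β:ℂ))) ≤ 1/4 := by
          rw [map_div₀]
          rw [div_le_iff₀ (by linarith)]
          have h1 : Complex.abs (z - (α:ℂ)) < (β-α)/8 := by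
            apply lt_of_lt_of_le hzd
            apply div_le_div_of_nonneg_left (by linarith) (by norm_num) (by nlinarith)
          nlinarith [Complex.abs.nonneg (z - (α:ℂ))]
        have hrle : Complex.abs (r z) ≤ 1/2 := by
          rw [habs_r]
          calc Real.sqrt (Complex.abs ((z - (α:ℂ))/(z - (β:ℂ)))) ≤ Real.sqrt (1/4) :=
                Real.sqrt_le_sqrt htabs
            _ = 1/2 := by
                rw [show (1/4:ℝ) = (1/2)^2 by norm_num, Real.sqrt_sq (by norm_num)]
        constructor
        · rw [map_div₀, le_div_iff₀ hb0]
          have h1 : s - 1/2 ≤ Complex.abs ((s:ℂ) - r z) := by linarith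
          linarith [htri_s3]
        · rw [map_div₀, div_le_iff₀ hb0]
          linarith [habs_den z, htri_s2]
      · -- near β : |r z| large
        have hzβ0 : (0:ℝ) < Complex.abs (z - (β:ℂ)) := by
          rw [Complex.abs.pos_iff]
          exact sub_ne_zero.mpr hzβ
        have hDα : (β - α)/2 ≤ Complex.abs (z - (α:ℂ)) := by
          have htri : Complex.abs ((β:ℂ) - (α:ℂ))
              ≤ Complex.abs ((β:ℂ) - z) + Complex.abs (z - (α:ℂ)) := by
            calc Complex.abs ((β:ℂ) - (α:ℂ)) = Complex.abs (((β:ℂ) - z) + (z - (α:ℂ))) := by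
                  congr 1; ring
              _ ≤ _ := Complex.abs.add_le _ _
          rw [habs_ba] at htri
          have hsym : Complex.abs ((β:ℂ) - z) = Complex.abs (z - (β:ℂ)) := by
            rw [show (β:ℂ) - z = -(z - (β:ℂ)) from by ring, Complex.abs.map_neg]
          rw [hsym] at htri
          have h2 : Complex.abs (z - (β:ℂ)) < (β - α)/2 := lt_of_lt_of_le hzd hδle
          linarith
        have htabs : 4*s^2 ≤ Complex.abs ((z - (α:ℂ))/(z - (β:ℂ))) := by
          rw [map_div₀, le_div_iff₀ hzβ0]
          have h1 : Complex.abs (z - (β:ℂ)) < (β-α)/(8*s^2) := hzd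
          have h3 : 4*s^2 * Complex.abs (z - (β:ℂ)) < 4*s^2 * ((β-α)/(8*s^2)) := by
            apply mul_lt_mul_of_pos_left h1 (by positivity)
          have h4 : 4*s^2 * ((β-α)/(8*s^2)) = (β-α)/2 := by
            field_simp
            ring
          linarith
        have hrge : 2*s ≤ Complex.abs (r z) := by
          rw [habs_r]
          calc 2*s = Real.sqrt ((2*s)^2) := (Real.sqrt_sq (by linarith)).symm
            _ ≤ Real.sqrt (Complex.abs ((z - (α:ℂ))/(z - (β:ℂ)))) := by
                apply Real.sqrt_le_sqrt
                nlinarith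
        constructor
        · rw [map_div₀, le_div_iff₀ hb0]
          have h1 : Complex.abs (r z) - s ≤ Complex.abs ((s:ℂ) - r z) := by linarith [htri_r1]
          linarith [htri_s3]
        · rw [map_div₀, div_le_iff₀ hb0]
          have h1 : Complex.abs (r z) - s ≤ Complex.abs ((s:ℂ) + r z) := by linarith [htri_r2]
          linarith [htri_s2]
    -- conclude
    rw [hFeq]
    have hnl := S7.norm_log_le (((s:ℂ) - r z)/((s:ℂ) + r z))
    have l1 : Real.log (Complex.abs (((s:ℂ) - r z)/((s:ℂ) + r z))) ≤ Real.log 3 :=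
      Real.log_le_log (by linarith [key.1]) key.2
    have l2 : Real.log (1/3) ≤ Real.log (Complex.abs (((s:ℂ) - r z)/((s:ℂ) + r z))) :=
      Real.log_le_log (by norm_num) key.1
    have l3 : Real.log ((1:ℝ)/3) = -Real.log 3 := by rw [one_div, Real.log_inv]
    have l4 : |Real.log (Complex.abs (((s:ℂ) - r z)/((s:ℂ) + r z)))| ≤ Real.log 3 := by
      rw [abs_le]
      constructor <;> linarith
    linarith
end

section
/- Let ν ≥ 1 be an integer and y > 0, and let P(s) = Σ_{j=0}^{ν−1} ((2j)!/(j!)²)·y^{2j}·s^{2(ν−1−j)}. Then ∫_{−2y}^{2y} P(ξ)·√(4y² − ξ²) dξ = 2π y² P(2y)/ν. -/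
open MeasureTheory

open MeasureTheory Real Finset intervalIntegral

/-- `∫_{-π/2}^{π/2} sin^{2k} = π · C(2k,k)/4^k`. -/
lemma sin_pow_int (k : ℕ) :
    (∫ x in (-(π/2))..(π/2), Real.sin x ^ (2*k))
      = π * (Nat.centralBinom k : ℝ) / 4^k := by
  induction k with
  | zero => simp [Nat.centralBinom]
  | succ k ih =>
      have h := @integral_sin_pow (-(π/2)) (π/2) (2*k)
      have h2 : (2:ℕ)*(k+1) = 2*k+2 := by ring
      rw [h2, h, Real.cos_pi_div_two, Real.cos_neg, Real.cos_pi_div_two, ih]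
      have hc := Nat.succ_mul_centralBinom_succ k
      have hcr : ((k:ℝ)+1) * (Nat.centralBinom (k+1) : ℝ)
          = 2*(2*(k:ℝ)+1) * (Nat.centralBinom k : ℝ) := by exact_mod_cast hc
      have h4 : (4:ℝ)^k ≠ 0 := by positivity
      field_simp
      push_cast
      linear_combination (-2 * π * (4:ℝ)^k) * hcr

/-- `∫_{-π/2}^{π/2} sin^{2k}cos² = π · Cat k/(2·4^k)`. -/
lemma sin_cos_int (k : ℕ) :
    (∫ x in (-(π/2))..(π/2), Real.sin x ^ (2*k) * Real.cos x ^ 2)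
      = π * (catalan k : ℝ) / (2 * 4^k) := by
  have hcong : (∫ x in (-(π/2))..(π/2), Real.sin x ^ (2*k) * Real.cos x ^ 2)
      = ∫ x in (-(π/2))..(π/2), (Real.sin x ^ (2*k) - Real.sin x ^ (2*(k+1))) := by
    apply intervalIntegral.integral_congr
    intro x _
    simp only [Real.cos_sq']
    ring
  rw [hcong, intervalIntegral.integral_sub (f := fun x => Real.sin x ^ (2*k))
      (g := fun x => Real.sin x ^ (2*(k+1)))
      ((Real.continuous_sin.pow _).intervalIntegrable _ _)
      ((Real.continuous_sin.pow _).intervalIntegrable _ _),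
    sin_pow_int, sin_pow_int]
  have hc := Nat.succ_mul_centralBinom_succ k
  have hcr : ((k:ℝ)+1) * (Nat.centralBinom (k+1) : ℝ)
      = 2*(2*(k:ℝ)+1) * (Nat.centralBinom k : ℝ) := by exact_mod_cast hc
  have hcat := succ_mul_catalan_eq_centralBinom k
  have hcatr : ((k:ℝ)+1) * (catalan k : ℝ) = (Nat.centralBinom k : ℝ) := by
    exact_mod_cast hcat
  have hk1 : ((k:ℝ)+1) ≠ 0 := by positivity
  have e1 : (Nat.centralBinom (k+1) : ℝ)
      = 2*(2*(k:ℝ)+1) * (Nat.centralBinom k : ℝ) / ((k:ℝ)+1) := by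
    field_simp
    linarith [hcr]
  have e2 : ((catalan k : ℝ)) = (Nat.centralBinom k : ℝ)/((k:ℝ)+1) := by
    field_simp
    linarith [hcatr]
  rw [e1, e2]
  have h4 : (4:ℝ)^k ≠ 0 := by positivity
  field_simp
  ring

lemma unit_int (k : ℕ) :
    (∫ u in (-1:ℝ)..1, u^(2*k) * Real.sqrt (1 - u^2))
      = π * (catalan k : ℝ) / (2*4^k) :=
  calc
    _ = ∫ u in Real.sin (-(π/2))..Real.sin (π/2), u^(2*k) * Real.sqrt (1 - u^2) := by
        rw [Real.sin_neg, Real.sin_pi_div_two]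
    _ = ∫ x in (-(π/2))..(π/2), (Real.sin x^(2*k) * Real.sqrt (1 - Real.sin x^2)) * Real.cos x :=
        (integral_comp_mul_deriv (fun x _ => Real.hasDerivAt_sin x) Real.continuousOn_cos
          (by fun_prop)).symm
    _ = ∫ x in (-(π/2))..(π/2), Real.sin x^(2*k) * Real.cos x^2 := by
        refine intervalIntegral.integral_congr_ae (MeasureTheory.ae_of_all _ fun x h => ?_)
        rw [Set.uIoc_of_le (neg_le_self (le_of_lt (half_pos Real.pi_pos))), Set.mem_Ioc] at h
        rw [← Real.cos_eq_sqrt_one_sub_sin_sq (le_of_lt h.1) h.2]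
        ring
    _ = _ := sin_cos_int k

lemma scaled_int (a : ℝ) (ha : 0 < a) (k : ℕ) :
    (∫ x in (-a)..a, x^(2*k) * Real.sqrt (a^2 - x^2))
      = a^(2*k+2) * (π * (catalan k : ℝ) / (2*4^k)) := by
  have h := intervalIntegral.smul_integral_comp_mul_left
    (f := fun x => x^(2*k) * Real.sqrt (a^2 - x^2)) (a := (-1:ℝ)) (b := 1) a
  have hfun : ∀ u : ℝ, (a*u)^(2*k) * Real.sqrt (a^2 - (a*u)^2)
      = a^(2*k+1) * (u^(2*k) * Real.sqrt (1-u^2)) := by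
    intro u
    have h2 : a^2 - (a*u)^2 = a^2 * (1-u^2) := by ring
    rw [h2, Real.sqrt_mul (sq_nonneg a), Real.sqrt_sq ha.le, mul_pow]
    ring
  simp only [hfun, intervalIntegral.integral_const_mul, unit_int, smul_eq_mul,
    mul_neg_one, mul_one] at h
  rw [← h]
  ring

lemma conv_catalan (n : ℕ) :
    2 * ∑ j ∈ Finset.range (n+1), Nat.centralBinom j * catalan (n-j)
      = Nat.centralBinom (n+1) := by
  have h1 : ∑ j ∈ Finset.range (n+1), Nat.centralBinom j * catalan (n-j)
      = ∑ j ∈ Finset.range (n+1), (j+1) * (catalan j * catalan (n-j)) := by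
    refine Finset.sum_congr rfl fun j _ => ?_
    rw [← succ_mul_catalan_eq_centralBinom]; ring
  have h2 : ∑ j ∈ Finset.range (n+1), (j+1) * (catalan j * catalan (n-j))
      = ∑ j ∈ Finset.range (n+1), (n-j+1) * (catalan j * catalan (n-j)) := by
    rw [← Finset.sum_range_reflect (fun j => (j+1) * (catalan j * catalan (n-j))) (n+1)]
    refine Finset.sum_congr rfl fun j hj => ?_
    have hj' : j ≤ n := Nat.lt_succ_iff.mp (Finset.mem_range.mp hj)
    have e1 : n + 1 - 1 - j = n - j := by omega
    have e2 : n - (n - j) = j := by omega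
    rw [e1, e2]; ring
  have h3 : 2 * ∑ j ∈ Finset.range (n+1), Nat.centralBinom j * catalan (n-j)
      = ∑ j ∈ Finset.range (n+1), (n+2) * (catalan j * catalan (n-j)) := by
    rw [two_mul, h1]
    nth_rewrite 2 [h2]
    rw [← Finset.sum_add_distrib]
    refine Finset.sum_congr rfl fun j hj => ?_
    have hj' : j ≤ n := Nat.lt_succ_iff.mp (Finset.mem_range.mp hj)
    have : (j+1) + (n-j+1) = n+2 := by omega
    rw [← add_mul, this]
  rw [h3, ← Finset.mul_sum]
  have h4 : ∑ j ∈ Finset.range (n+1), catalan j * catalan (n-j) = catalan (n+1) := by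
    rw [catalan_succ n]
    exact Finset.sum_range fun i => catalan i * catalan (n - i)
  rw [h4]
  exact succ_mul_catalan_eq_centralBinom (n+1)

lemma conv_four (n : ℕ) :
    ∑ j ∈ Finset.range (n+1), Nat.centralBinom j * 4^(n-j)
      = (2*n+1) * Nat.centralBinom n := by
  induction n with
  | zero => simp [Nat.centralBinom]
  | succ n ih =>
      rw [Finset.sum_range_succ]
      have hstep : ∑ j ∈ Finset.range (n+1), Nat.centralBinom j * 4^(n+1-j)
          = 4 * ∑ j ∈ Finset.range (n+1), Nat.centralBinom j * 4^(n-j) := by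
        rw [Finset.mul_sum]
        refine Finset.sum_congr rfl fun j hj => ?_
        have hj' : j ≤ n := Nat.lt_succ_iff.mp (Finset.mem_range.mp hj)
        have : n+1-j = (n-j)+1 := by omega
        rw [this, pow_succ]; ring
      rw [hstep, ih]
      have hc := Nat.succ_mul_centralBinom_succ n
      simp only [Nat.sub_self, pow_zero, mul_one]
      zify at hc ⊢
      linear_combination (-2:ℤ) * hc

lemma pow4_eq (k : ℕ) : (4:ℝ)^k = (2:ℝ)^(2*k) := by
  rw [pow_mul]; norm_num

lemma term_lhs (y b c : ℝ) (j k : ℕ) :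
    b * y^(2*j) * ((2*y)^(2*k+2) * (π * c / (2*4^k)))
      = 2*π*y^(2*(j+k+1)) * (b*c) := by
  have h4 : (4:ℝ)^k ≠ 0 := by positivity
  rw [pow4_eq]
  field_simp
  ring

lemma term_rhs (y b : ℝ) (j k : ℕ) :
    b * y^(2*j) * (2*y)^(2*k) = b * 4^k * y^(2*(j+k)) := by
  rw [pow4_eq]
  ring


/-- `∫_{−2y}^{2y} P(ξ)√(4y²−ξ²) dξ = 2πy²P(2y)/ν` for the
polynomial `P(s) = Σ_{j<ν} C(2j,j) y^{2j} s^{2(ν−1−j)}`. -/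
theorem stmt14 (ν : ℕ) (hν : 1 ≤ ν) (y : ℝ) (hy : 0 < y)
    (P : ℝ → ℝ)
    (hP : ∀ s : ℝ, P s = ∑ j ∈ Finset.range ν,
      (Nat.choose (2*j) j : ℝ) * y^(2*j) * s^(2*(ν-1-j))) :
    (∫ ξ in (-(2*y))..(2*y), P ξ * Real.sqrt (4*y^2 - ξ^2))
      = 2 * Real.pi * y^2 * P (2*y) / ν := by
  obtain ⟨m, rfl⟩ : ∃ m, ν = m + 1 := ⟨ν - 1, by omega⟩
  have ha : (0:ℝ) < 2*y := by linarith
  have hfun : ∀ ξ : ℝ, P ξ * Real.sqrt (4*y^2 - ξ^2)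
      = ∑ j ∈ Finset.range (m+1),
          ((Nat.centralBinom j : ℝ) * y^(2*j)) *
            (ξ^(2*(m-j)) * Real.sqrt ((2*y)^2 - ξ^2)) := by
    intro ξ
    rw [hP, Finset.sum_mul]
    refine Finset.sum_congr rfl fun j _ => ?_
    have h1 : m + 1 - 1 - j = m - j := by omega
    have h2 : (4:ℝ)*y^2 - ξ^2 = (2*y)^2 - ξ^2 := by ring
    rw [h1, h2, Nat.centralBinom]
    ring
  rw [intervalIntegral.integral_congr (fun ξ _ => hfun ξ),
    intervalIntegral.integral_finset_sum (fun j _ => by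
      apply Continuous.intervalIntegrable
      fun_prop)]
  simp only [intervalIntegral.integral_const_mul, scaled_int (2*y) ha]
  have hL : ∑ j ∈ Finset.range (m+1),
      ((Nat.centralBinom j : ℝ) * y^(2*j)) *
        ((2*y)^(2*(m-j)+2) * (π * (catalan (m-j) : ℝ) / (2*4^(m-j))))
      = π * y^(2*(m+1)) * (Nat.centralBinom (m+1) : ℝ) := by
    have hterm : ∀ j ∈ Finset.range (m+1),
        ((Nat.centralBinom j : ℝ) * y^(2*j)) *
          ((2*y)^(2*(m-j)+2) * (π * (catalan (m-j) : ℝ) / (2*4^(m-j))))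
        = 2*π*y^(2*(m+1)) * ((Nat.centralBinom j : ℝ) * (catalan (m-j) : ℝ)) := by
      intro j hj
      have hj' : j ≤ m := Nat.lt_succ_iff.mp (Finset.mem_range.mp hj)
      have hk : j + (m-j) + 1 = m+1 := by omega
      have := term_lhs y (Nat.centralBinom j : ℝ) (catalan (m-j) : ℝ) j (m-j)
      rw [hk] at this
      linarith [this]
    rw [Finset.sum_congr rfl hterm, ← Finset.mul_sum]
    have hcast : ∑ j ∈ Finset.range (m+1),
        ((Nat.centralBinom j : ℝ) * (catalan (m-j) : ℝ))
        = ((∑ j ∈ Finset.range (m+1), Nat.centralBinom j * catalan (m-j) : ℕ) : ℝ) := by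
      push_cast; rfl
    rw [hcast]
    have hcc : (2:ℝ) * ((∑ j ∈ Finset.range (m+1), Nat.centralBinom j * catalan (m-j) : ℕ) : ℝ)
        = ((Nat.centralBinom (m+1) : ℕ) : ℝ) := by exact_mod_cast conv_catalan m
    linear_combination π * y^(2*(m+1)) * hcc
  rw [hL, hP (2*y)]
  have hR : ∑ j ∈ Finset.range (m+1),
      (Nat.choose (2*j) j : ℝ) * y^(2*j) * (2*y)^(2*(m+1-1-j))
      = y^(2*m) * ((2*(m:ℝ)+1) * (Nat.centralBinom m : ℝ)) := by
    have hterm : ∀ j ∈ Finset.range (m+1),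
        (Nat.choose (2*j) j : ℝ) * y^(2*j) * (2*y)^(2*(m+1-1-j))
        = y^(2*m) * ((Nat.centralBinom j : ℝ) * (4:ℝ)^(m-j)) := by
      intro j hj
      have hj' : j ≤ m := Nat.lt_succ_iff.mp (Finset.mem_range.mp hj)
      have h1 : m + 1 - 1 - j = m - j := by omega
      have hk : j + (m-j) = m := by omega
      have := term_rhs y (Nat.centralBinom j : ℝ) j (m-j)
      rw [hk] at this
      rw [h1, ← Nat.centralBinom, this]
      ring
    rw [Finset.sum_congr rfl hterm, ← Finset.mul_sum]
    have hcast : ∑ j ∈ Finset.range (m+1),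
        ((Nat.centralBinom j : ℝ) * (4:ℝ)^(m-j))
        = ((∑ j ∈ Finset.range (m+1), Nat.centralBinom j * 4^(m-j) : ℕ) : ℝ) := by
      push_cast; rfl
    rw [hcast, conv_four m]
    push_cast
    ring
  rw [hR]
  have hc := Nat.succ_mul_centralBinom_succ m
  have hcr : ((m:ℝ)+1) * (Nat.centralBinom (m+1) : ℝ)
      = 2*(2*(m:ℝ)+1) * (Nat.centralBinom m : ℝ) := by exact_mod_cast hc
  have hm1 : ((m:ℝ)+1) ≠ 0 := by positivity
  have hcast : ((m+1 : ℕ) : ℝ) = (m:ℝ)+1 := by push_cast; ring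
  rw [hcast, eq_div_iff hm1]
  linear_combination π * y^(2*(m+1)) * hcr
end

section
/- Let ν ≥ 1 be an integer and y > 0, and let P(s) = Σ_{j=0}^{ν−1} ((2j)!/(j!)²)·y^{2j}·s^{2(ν−1−j)}. Then the polynomial identity (ξ² − 4y²)·((2ν−2)·P(ξ) − ξ·P′(ξ)) = 4y²·(P(ξ) − P(2y)) holds for all ξ; in particular (2ν−2)P(ξ) − ξP′(ξ) = (4y²/(ξ²−4y²))·(P(ξ) − P(2y)) for ξ² ≠ 4y². -/
open Finset

private noncomputable def cb (j : ℕ) : ℝ := (Nat.choose (2*j) j : ℝ)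

private lemma cb_rec (m : ℕ) : ((m:ℝ)+1) * cb (m+1) = (4*m+2) * cb m := by
  have h := Nat.succ_mul_centralBinom_succ m
  have h1 : Nat.centralBinom m = Nat.choose (2*m) m := rfl
  have h2 : Nat.centralBinom (m+1) = Nat.choose (2*(m+1)) (m+1) := rfl
  rw [h1, h2] at h
  have := congrArg (fun n : ℕ => (n : ℝ)) h
  push_cast at this
  unfold cb
  linarith

private lemma sum_shift (f : ℕ → ℝ) (x : ℝ) (m : ℕ) :
    ∑ j ∈ range (m+2), f j * x^(2*(m+1-j))
      = x^2 * ∑ j ∈ range (m+1), f j * x^(2*(m-j)) + f (m+1) := by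
  rw [Finset.sum_range_succ, Nat.sub_self, Finset.mul_sum]
  congr 1
  · refine Finset.sum_congr rfl fun j hj => ?_
    have hj' : j ≤ m := by simpa using Nat.lt_succ_iff.mp (Finset.mem_range.mp hj)
    have : 2*(m+1-j) = 2*(m-j) + 2 := by omega
    rw [this, pow_add]
    ring
  · simp

private lemma sum_c (m : ℕ) (y : ℝ) :
    ∑ j ∈ range (m+1), cb j * y^(2*j) * (2*y)^(2*(m-j))
      = (2*m+1) * cb m * y^(2*m) := by
  induction m with
  | zero => simp [cb]
  | succ m ih =>
    rw [sum_shift (fun j => cb j * y^(2*j)) (2*y) m, ih]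
    have hb := cb_rec m
    push_cast
    linear_combination (-2*y^(2*m+2)) * hb

private lemma key (m : ℕ) (y ξ : ℝ) :
    (ξ^2 - 4*y^2) * (∑ j ∈ range (m+1), 2*(j:ℝ) * cb j * y^(2*j) * ξ^(2*(m-j)))
      = 4*y^2 * ((∑ j ∈ range (m+1), cb j * y^(2*j) * ξ^(2*(m-j)))
          - ∑ j ∈ range (m+1), cb j * y^(2*j) * (2*y)^(2*(m-j))) := by
  induction m with
  | zero => simp
  | succ m ih =>
    rw [sum_shift (fun j => 2*(j:ℝ) * cb j * y^(2*j)) ξ m,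
        sum_shift (fun j => cb j * y^(2*j)) ξ m,
        sum_shift (fun j => cb j * y^(2*j)) (2*y) m]
    have hc := sum_c m y
    have hb := cb_rec m
    push_cast
    linear_combination ξ^2 * ih + (ξ^2 - 4*y^2) * (2*y^(2*m+2)) * hb
      - (ξ^2 - 4*y^2) * (4*y^2) * hc

open Finset

private lemma term_eq (c ξ : ℝ) (k : ℕ) :
    ξ * (c * ((2*k : ℕ) * ξ^(2*k-1))) = 2*(k:ℝ)*c*ξ^(2*k) := by
  cases k with
  | zero => simp
  | succ k =>
    have h : 2*(k+1)-1 = 2*k+1 := by omega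
    rw [h]
    push_cast
    ring

/-- the differential identity
`(ξ²−4y²)((2ν−2)P(ξ) − ξP′(ξ)) = 4y²(P(ξ) − P(2y))` for
`P(s) = Σ_{j<ν} C(2j,j) y^{2j} s^{2(ν−1−j)}`, together with the resulting
quotient form away from `ξ² = 4y²`. -/
theorem stmt16 (ν : ℕ) (hν : 1 ≤ ν) (y : ℝ) (hy : 0 < y)
    (P : ℝ → ℝ)
    (hP : ∀ s : ℝ, P s = ∑ j ∈ Finset.range ν,
      (Nat.choose (2*j) j : ℝ) * y^(2*j) * s^(2*(ν-1-j))) :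
    (∀ ξ : ℝ, (ξ^2 - 4*y^2) * ((2*(ν:ℝ) - 2) * P ξ - ξ * deriv P ξ)
        = 4*y^2 * (P ξ - P (2*y))) ∧
    (∀ ξ : ℝ, ξ^2 ≠ 4*y^2 →
      (2*(ν:ℝ) - 2) * P ξ - ξ * deriv P ξ
        = (4*y^2/(ξ^2 - 4*y^2)) * (P ξ - P (2*y))) := by
  obtain ⟨m, rfl⟩ : ∃ m, ν = m + 1 := ⟨ν - 1, (Nat.succ_pred_eq_of_pos hν).symm⟩
  have hPfun : P = fun s => ∑ j ∈ range (m+1), cb j * y^(2*j) * s^(2*(m-j)) := by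
    funext s
    rw [hP s]
    simp [cb]
  have hderiv : ∀ ξ : ℝ, deriv P ξ
      = ∑ j ∈ range (m+1), cb j * y^(2*j) * ((2*(m-j) : ℕ) * ξ^(2*(m-j)-1)) := by
    intro ξ
    rw [hPfun]
    rw [deriv_fun_sum (fun j _ => by
      exact (differentiableAt_pow (𝕜 := ℝ) _).const_mul _)]
    refine Finset.sum_congr rfl fun j _ => ?_
    rw [deriv_const_mul _ (differentiableAt_pow _), deriv_pow_field]
  have hmain : ∀ ξ : ℝ, (2*((m+1:ℕ):ℝ) - 2) * P ξ - ξ * deriv P ξ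
      = ∑ j ∈ range (m+1), 2*(j:ℝ) * cb j * y^(2*j) * ξ^(2*(m-j)) := by
    intro ξ
    rw [hderiv ξ, hPfun]
    simp only [Finset.mul_sum]
    rw [← Finset.sum_sub_distrib]
    refine Finset.sum_congr rfl fun j hj => ?_
    have hj' : j ≤ m := Nat.lt_succ_iff.mp (Finset.mem_range.mp hj)
    rw [term_eq]
    have hk : ((m - j : ℕ) : ℝ) = (m:ℝ) - (j:ℝ) := by
      push_cast [Nat.cast_sub hj']; ring
    push_cast
    linear_combination (-2*(cb j * y^(2*j))*ξ^(2*(m-j))) * hk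
  have hP2y : P (2*y) = ∑ j ∈ range (m+1), cb j * y^(2*j) * (2*y)^(2*(m-j)) := by
    rw [hPfun]
  have hfirst : ∀ ξ : ℝ, (ξ^2 - 4*y^2) * ((2*((m+1:ℕ):ℝ) - 2) * P ξ - ξ * deriv P ξ)
      = 4*y^2 * (P ξ - P (2*y)) := by
    intro ξ
    have hPx : P ξ = ∑ j ∈ range (m+1), cb j * y^(2*j) * ξ^(2*(m-j)) := by rw [hPfun]
    rw [hmain ξ, hPx, hP2y]
    exact key m y ξ
  constructor
  · exact hfirst
  · intro ξ hξ
    have hne : ξ^2 - 4*y^2 ≠ 0 := sub_ne_zero.mpr hξ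
    rw [div_mul_eq_mul_div, eq_div_iff hne]
    linear_combination hfirst ξ
end
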